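/- Let b = 0 or 1 and let S, T ∈ A^b_G with T ⊆ S. Then for every O_S ∈ O^b(G − S) there exists O_T ∈ O^b(G − T) whose restriction to G − S equals O_S. Moreover, if O_S ∼ O'_S for some O'_S ∈ O^b(G − S), there exists O'_T ∈ O^b(G − T) whose restriction to G − S equals O'_S and with O'_T ∼ O_T. -/

import Mathlib

/-!
Common framework: finite vertex-weighted multigraphs (loops and multiple edges
allowed), generalized orientations, divisors, contractions, and poset gadgets.

A graph is encoded by a finite set `V ⊆ ℕ` of vertices, a finite set `E ⊆ ℕ`
of edges, an "ends" function assigning to each edge its ordered pair of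
end-vertices (the two components encode the two half-edges), and a weight
function `w : ℕ → ℕ`.

A generalized orientation is a function `ℕ → Option EdgeDir`, where `none`
means the edge is absent (an orientation on a spanning subgraph `G − S` takes
the value `none` exactly on edges outside `E \ S`), `fwd`/`bwd` give the edge a
single direction, and `bi` makes the edge bioriented.
-/

open scoped Classical
open Finset

/-- Direction of an edge under a generalized orientation. -/
inductive EdgeDir : Type
  | fwd
  | bwd
  | bi
deriving DecidableEq

/-- Generalized orientation data. -/
abbrev Orient : Type := ℕ → Option EdgeDir

/-- The number of ending (target) half-edges at the vertex `v` of an edge with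
end-pair `p`, given its direction `d`.  A one-way oriented edge has exactly
one target end; a bioriented edge has both ends as targets. -/
def dirT : Option EdgeDir → ℕ × ℕ → ℕ → ℕ
  | none, _, _ => 0
  | some EdgeDir.fwd, p, v => if p.2 = v then 1 else 0
  | some EdgeDir.bwd, p, v => if p.1 = v then 1 else 0
  | some EdgeDir.bi, p, v => (if p.1 = v then 1 else 0) + (if p.2 = v then 1 else 0)

/-- Restriction of orientation data to the set `D` of kept edges. -/
def restr (O : Orient) (D : Finset ℕ) : Orient := fun e => if e ∈ D then O e else none

/-- A finite vertex-weighted multigraph. -/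
structure WGraph : Type where
  V : Finset ℕ
  E : Finset ℕ
  ends : ℕ → ℕ × ℕ
  w : ℕ → ℕ
  ends_mem : ∀ e ∈ E, (ends e).1 ∈ V ∧ (ends e).2 ∈ V

namespace WGraph

variable (G : WGraph)

/-- Edge set of the induced subgraph `(G−S)[Z]`: edges of `G − S` with both
ends in `Z`. -/
def indEdges (S Z : Finset ℕ) : Finset ℕ :=
  (G.E \ S).filter fun e => (G.ends e).1 ∈ Z ∧ (G.ends e).2 ∈ Z

/-- The cut `E(Z, Zᶜ)` in `G − S`: edges of `G − S` with exactly one end in `Z`. -/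
def cutEdges (S Z : Finset ℕ) : Finset ℕ :=
  (G.E \ S).filter fun e =>
    ((G.ends e).1 ∈ Z ∧ (G.ends e).2 ∉ Z) ∨ ((G.ends e).1 ∉ Z ∧ (G.ends e).2 ∈ Z)

/-- Adjacency via an edge belonging to `F ∩ E`. -/
def adjOn (F : Finset ℕ) (u v : ℕ) : Prop :=
  ∃ e ∈ F ∩ G.E, G.ends e = (u, v) ∨ G.ends e = (v, u)

/-- Number of connected components of the subgraph with vertex set `W` and
edge set `F`. -/
noncomputable def ncomp (W F : Finset ℕ) : ℕ :=
  Nat.card (Quot (fun u v : {x : ℕ // x ∈ W} => G.adjOn F u.1 v.1))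

/-- The subgraph with vertex set `W` and edge set `F` is connected. -/
def ConnSub (W F : Finset ℕ) : Prop := G.ncomp W F = 1

/-- `G` is connected. -/
def Connected : Prop := G.ConnSub G.V G.E

/-- Genus of the subgraph with vertex set `W` and edge set `F`:
`∑_{v ∈ W} w(v) − |W| + |F| + c`. -/
noncomputable def subGenus (W F : Finset ℕ) : ℤ :=
  (∑ v ∈ W, (G.w v : ℤ)) - (W.card : ℤ) + (((F ∩ G.E).card : ℤ)) + (G.ncomp W F : ℤ)

/-- The genus of `G`. -/
noncomputable def genus : ℤ := G.subGenus G.V G.E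

/-- The degree of a vertex: the number of half-edges having `v` as end. -/
def deg (v : ℕ) : ℕ :=
  ∑ e ∈ G.E, ((if (G.ends e).1 = v then 1 else 0) + (if (G.ends e).2 = v then 1 else 0))

/-- `e` is a bridge of `G − S`: removing it increases the number of connected
components. -/
def IsBridge (S : Finset ℕ) (e : ℕ) : Prop :=
  e ∈ G.E \ S ∧ G.ncomp G.V (G.E \ S) < G.ncomp G.V (G.E \ insert e S)

/-- The set of bridges of `G − S`. -/
noncomputable def bridges (S : Finset ℕ) : Finset ℕ := (G.E \ S).filter (G.IsBridge S)

/-- `T` is a cut of `G`, i.e. `T = E(Z, Zᶜ)` for some `∅ ⊊ Z ⊊ V`. -/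
def IsCut (T : Finset ℕ) : Prop :=
  ∃ Z, Z ⊆ G.V ∧ Z.Nonempty ∧ Z ≠ G.V ∧ T = G.cutEdges ∅ Z

/-- `W` is (the vertex set of) a connected component of `G − S`. -/
def IsCompOf (S W : Finset ℕ) : Prop :=
  W ⊆ G.V ∧ W.Nonempty ∧ G.ConnSub W (G.indEdges S W) ∧ G.cutEdges S W = ∅

/-- The poset `A^b_G`: for `b = 0` the sets `S ⊆ E` with `G − S` bridgeless,
for `b = 1` the sets `S ⊆ E` with `G − S` connected. -/
def Ab (b : ℕ) (S : Finset ℕ) : Prop :=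
  S ⊆ G.E ∧ ((b = 0 ∧ ∀ e, ¬ G.IsBridge S e) ∨ (b = 1 ∧ G.ConnSub G.V (G.E \ S)))

/-- `G` is a stable graph of genus `g`: connected, of genus `g`, and every
vertex of weight `0` has degree at least `3`. -/
noncomputable def Stable (g : ℕ) : Prop :=
  G.Connected ∧ G.genus = (g : ℤ) ∧ ∀ v ∈ G.V, G.w v = 0 → 3 ≤ G.deg v

/-! ### Generalized orientations on spanning subgraphs -/

/-- `O` is orientation data for the spanning subgraph `G − S` (it is defined
exactly on the edges of `G − S`). -/
def IsOrientOn (S : Finset ℕ) (O : Orient) : Prop :=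
  ∀ e, O e ≠ none ↔ e ∈ G.E \ S

/-- The set of bioriented edges of `O`. -/
def biE (O : Orient) : Finset ℕ := G.E.filter fun e => O e = some EdgeDir.bi

/-- `t^O_v`: the number of half-edges having `v` as target. -/
def tOr (O : Orient) (v : ℕ) : ℕ := ∑ e ∈ G.E, dirT (O e) (G.ends e) v

/-- `t^O(Z)`: the number of edges of `G − S` not contained in `(G−S)[Z]`
having a target in `Z`. -/
def tCut (S : Finset ℕ) (O : Orient) (Z : Finset ℕ) : ℕ :=
  ∑ e ∈ (G.E \ S) \ G.indEdges S Z, ∑ v ∈ Z, dirT (O e) (G.ends e) v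

/-- The divisor `d^O` of a `b`-orientation `O` on `G − S`:
`d^O_v = w(v) − 1 + t^O_v` if `G − S` has edges, and `d^O_v = w(v) − 1 + b`
otherwise; it is supported on `V`. -/
noncomputable def divOr (S : Finset ℕ) (b : ℕ) (O : Orient) : ℕ → ℤ :=
  fun v => if v ∈ G.V then
      (if G.E \ S = ∅ then (G.w v : ℤ) - 1 + (b : ℤ) else (G.w v : ℤ) - 1 + (G.tOr O v : ℤ))
    else 0

/-- Equivalence of generalized orientations on `G − S`:  both are orientations
on `G − S` and they have the same divisor. -/
noncomputable def equivOr (S : Finset ℕ) (b : ℕ) (O O' : Orient) : Prop :=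
  G.IsOrientOn S O ∧ G.IsOrientOn S O' ∧ G.divOr S b O = G.divOr S b O'

/-- `O` is a totally cyclic orientation on `G − S`: every nonempty cut
`E(Z,Zᶜ)` contains an edge with target in `Z` and an edge with target in `Zᶜ`. -/
def TotCyc (S : Finset ℕ) (O : Orient) : Prop :=
  ∀ Z : Finset ℕ, Z ⊆ G.V → Z.Nonempty → Z ≠ G.V → (G.cutEdges S Z).Nonempty →
    (∃ e ∈ G.cutEdges S Z, ∃ v ∈ Z, 0 < dirT (O e) (G.ends e) v) ∧
    (∃ e ∈ G.cutEdges S Z, ∃ v ∈ G.V \ Z, 0 < dirT (O e) (G.ends e) v)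

/-- `O` is `e₀`-rooted on `G − S`: for every `Z ⊊ V` with `e₀` an edge of
`(G−S)[Z]`, the cut `E(Z,Zᶜ)` contains an edge with target in `Zᶜ`. -/
def RootedAt (S : Finset ℕ) (O : Orient) (e₀ : ℕ) : Prop :=
  ∀ Z : Finset ℕ, Z ⊆ G.V → Z ≠ G.V → e₀ ∈ G.indEdges S Z →
    ∃ e ∈ G.cutEdges S Z, ∃ v ∈ G.V \ Z, 0 < dirT (O e) (G.ends e) v

/-- `O` is a rooted `1`-orientation on `G − S`:  it has exactly one bioriented
edge, at which it is rooted.  By convention, if `G − S` consists of a single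
vertex (and no edges), the empty orientation is rooted. -/
def Rooted1 (S : Finset ℕ) (O : Orient) : Prop :=
  (∃ e₀, G.biE O = {e₀} ∧ G.RootedAt S O e₀) ∨ (G.E \ S = ∅ ∧ G.V.card = 1)

/-- `O ∈ 𝒪^b(G−S)`:  for `b = 0`, a totally cyclic orientation on `G − S`;
for `b = 1`, a rooted `1`-orientation on `G − S`. -/
def MemOb (S : Finset ℕ) (b : ℕ) (O : Orient) : Prop :=
  G.IsOrientOn S O ∧
    ((b = 0 ∧ G.biE O = ∅ ∧ G.TotCyc S O) ∨ (b = 1 ∧ G.Rooted1 S O))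

/-- `O` is a `b`-orientation on `G − S` (exactly `b` bioriented edges; by
convention the empty orientation on a one-vertex edgeless graph counts as a
`1`-orientation). -/
def IsbOr (S : Finset ℕ) (b : ℕ) (O : Orient) : Prop :=
  G.IsOrientOn S O ∧
    ((G.biE O).card = b ∨ (G.E \ S = ∅ ∧ G.V.card = 1 ∧ b = 1))

/-! ### Posets of orientations on spanning subgraphs -/

/-- The order of `𝒪𝒫^b_G` on pairs `(S, O_S)`:  `(S,O_S) ≤ (T,O_T)` iff
`T ⊆ S` and the restriction of `O_T` to `G − S` is `O_S`. -/
def leOP (p q : Finset ℕ × Orient) : Prop :=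
  q.1 ⊆ p.1 ∧ restr q.2 (G.E \ p.1) = p.2

/-- The order of `𝒪̄𝒫^b_G` on pairs (representing classes): `(S,O̅_S) ≤ (T,O̅_T)`
iff `T ⊆ S` and some representative of `O̅_T` restricts on `G − S` to some
representative of `O̅_S`. -/
noncomputable def leOPbar (b : ℕ) (p q : Finset ℕ × Orient) : Prop :=
  q.1 ⊆ p.1 ∧ ∃ O', G.equivOr q.1 b O' q.2 ∧
    G.equivOr p.1 b (restr O' (G.E \ p.1)) p.2

/-- Equality in `𝒪̄𝒫^b_G`: same subgraph and equivalent orientations. -/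
noncomputable def eqOP (b : ℕ) (p q : Finset ℕ × Orient) : Prop :=
  p.1 = q.1 ∧ G.equivOr p.1 b p.2 q.2

/-- Membership in `𝒪𝒫^b_G`. -/
def POb (b : ℕ) (p : Finset ℕ × Orient) : Prop :=
  G.Ab b p.1 ∧ G.MemOb p.1 b p.2

/-! ### Stable divisors -/

/-- Stable divisors on `G − S` of degree `g(G−S) − c(G−S) + b` (`b = 0, 1`):
for `b = 1`, `G − S` is connected, the degree is `g(G−S)` and
`|d_Z| > g(Z) − 1` for every `Z ⊆ V`; for `b = 0`, the restriction of `d` to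
every connected component `W` of `G − S` has degree `g(W) − 1` and satisfies
`|d_Z| > g(Z) − 1` for every `∅ ≠ Z ⊊ W`. -/
noncomputable def StableDiv (S : Finset ℕ) (b : ℕ) (d : ℕ → ℤ) : Prop :=
  (∀ v, v ∉ G.V → d v = 0) ∧
  ((b = 1 ∧ G.ConnSub G.V (G.E \ S) ∧
      (∑ v ∈ G.V, d v) = G.subGenus G.V (G.E \ S) ∧
      ∀ Z ⊆ G.V, G.subGenus Z (G.indEdges S Z) - 1 < ∑ v ∈ Z, d v) ∨
   (b = 0 ∧ ∀ W, G.IsCompOf S W →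
      (∑ v ∈ W, d v) = G.subGenus W (G.indEdges S W) - 1 ∧
      ∀ Z ⊆ W, Z.Nonempty → Z ≠ W →
        G.subGenus Z (G.indEdges S Z) - 1 < ∑ v ∈ Z, d v))

/-! ### Contractions -/

/-- The relation identifying the two ends of each edge in `S₀`. -/
def conRel (S₀ : Finset ℕ) (u v : ℕ) : Prop :=
  ∃ e ∈ S₀ ∩ G.E, G.ends e = (u, v) ∨ G.ends e = (v, u)

/-- Representative (the least element) of the class of `v` under the
equivalence generated by identifying the ends of the edges in `S₀`. -/
noncomputable def crep (S₀ : Finset ℕ) (v : ℕ) : ℕ :=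
  sInf {u | Relation.EqvGen (G.conRel S₀) u v}

/-- The (weighted) edge contraction `G/S₀`: every connected component of the
subgraph spanned by `S₀` is contracted to a single vertex, whose weight is the
genus of that component; `E(G/S₀) = E(G) \ S₀`. -/
noncomputable def contract (S₀ : Finset ℕ) : WGraph where
  V := G.V.image (G.crep S₀)
  E := G.E \ S₀
  ends := fun e => (G.crep S₀ (G.ends e).1, G.crep S₀ (G.ends e).2)
  w := fun v =>
    (G.subGenus (G.V.filter fun u => G.crep S₀ u = v)
      (G.indEdges (G.E \ S₀) (G.V.filter fun u => G.crep S₀ u = v))).toNat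
  ends_mem := by
    intro e he
    rw [Finset.mem_sdiff] at he
    exact ⟨Finset.mem_image_of_mem _ (G.ends_mem e he.1).1,
           Finset.mem_image_of_mem _ (G.ends_mem e he.1).2⟩

/-- Deletion of the edges in `T` (a spanning subgraph, as a graph). -/
def ddel (T : Finset ℕ) : WGraph where
  V := G.V
  E := G.E \ T
  ends := G.ends
  w := G.w
  ends_mem := fun e he => G.ends_mem e (Finset.mem_sdiff.mp he).1

/-- Pullback `γ* T` of an edge set along the contraction `γ : G → G/S₀`:
`T ∪ (G−T)_br` for `b = 0`, and `T` for `b = 1`. -/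
noncomputable def pullStar (b : ℕ) (T : Finset ℕ) : Finset ℕ :=
  if b = 0 then T ∪ G.bridges T else T

/-- Pushforward of a divisor along the contraction `γ : G → G/S₀`:
`(γ_* d)_v = ∑_{z ∈ γ⁻¹(v)} d_z`. -/
noncomputable def pushDiv (S₀ : Finset ℕ) (d : ℕ → ℤ) : ℕ → ℤ :=
  fun v => ∑ z ∈ G.V.filter (fun u => G.crep S₀ u = v), d z

/-- The divisor `c^{γ,S}` on `G/S₀`: `c^{γ,S}_v = #{e ∈ S₀ ∩ S : γ(e) = v}`. -/
noncomputable def cGamma (S₀ S : Finset ℕ) : ℕ → ℤ :=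
  fun v => ((((S₀ ∩ S) ∩ G.E).filter (fun e => G.crep S₀ (G.ends e).1 = v)).card : ℤ)

/-- The relation "`q` is a value of `γ̄_*` at `p`" for the contraction
`γ : G → G/S₀` acting on classes of orientations: `q` is the restriction to
`(G/S₀) − γ_* S` of a representative of the class of `p` having no bioriented
edge in `S₀` (when `(G/S₀) − γ_*S` has no edges, any representative serves). -/
noncomputable def pushRel (S₀ : Finset ℕ) (b : ℕ) (p q : Finset ℕ × Orient) : Prop :=
  ∃ O', G.equivOr p.1 b O' p.2 ∧
    ((∀ e ∈ S₀, O' e ≠ some EdgeDir.bi) ∨ G.E \ (S₀ ∪ p.1) = ∅) ∧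
    q.1 = p.1 \ S₀ ∧ q.2 = restr O' (G.E \ (S₀ ∪ p.1))

/-! ### Isomorphisms and directed reachability -/

/-- `(fV, fE)` is an isomorphism from `G` to `H`. -/
def IsoMaps (H : WGraph) (fV fE : ℕ → ℕ) : Prop :=
  Set.BijOn fV ↑G.V ↑H.V ∧ Set.BijOn fE ↑G.E ↑H.E ∧
  (∀ e ∈ G.E, H.ends (fE e) = (fV (G.ends e).1, fV (G.ends e).2) ∨
              H.ends (fE e) = (fV (G.ends e).2, fV (G.ends e).1)) ∧
  (∀ v ∈ G.V, H.w (fV v) = G.w v)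

/-- `G` and `H` are isomorphic graphs. -/
def Iso (H : WGraph) : Prop := ∃ fV fE, G.IsoMaps H fV fE

/-- The edge-contraction relation: `G ≤ H` iff `H = G/S₀` (up to isomorphism)
for some `S₀ ⊆ E(G)`. -/
noncomputable def contractLE (H : WGraph) : Prop :=
  ∃ S₀ ⊆ G.E, (G.contract S₀).Iso H

/-- One step from `u` to `v` along an `O`-directed edge (a bioriented edge may
be traversed in both directions). -/
def dirStep (O : Orient) (u v : ℕ) : Prop :=
  ∃ e ∈ G.E,
    (O e = some EdgeDir.fwd ∧ G.ends e = (u, v)) ∨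
    (O e = some EdgeDir.bwd ∧ G.ends e = (v, u)) ∨
    (O e = some EdgeDir.bi ∧ (G.ends e = (u, v) ∨ G.ends e = (v, u)))

/-- There is an `O`-directed path from the (bioriented) edge `e` to the
vertex `v`: a directed path starting at one of the ends of `e` and ending
at `v`. -/
def dirReachFromEdge (O : Orient) (e v : ℕ) : Prop :=
  ∃ u, ((G.ends e).1 = u ∨ (G.ends e).2 = u) ∧
    Relation.ReflTransGen (G.dirStep O) u v

end WGraph

/-! ### Generic poset gadgets (for sets with an order, modulo an equivalence) -/

/-- `le` is a partial order on `{a | P a}` modulo the identification `eqv`. -/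
def IsPartialOrderOnMod {α : Type*} (P : α → Prop) (eqv le : α → α → Prop) : Prop :=
  (∀ a, P a → le a a) ∧
  (∀ a b c, P a → P b → P c → le a b → le b c → le a c) ∧
  (∀ a b, P a → P b → le a b → le b a → eqv a b)

/-- `le` is a partial order on `{a | P a}`. -/
def IsPartialOrderOn {α : Type*} (P : α → Prop) (le : α → α → Prop) : Prop :=
  IsPartialOrderOnMod P (· = ·) le

/-- `a'` covers `a` in `{a | P a}` ordered by `le`, modulo `eqv`. -/
def CoversOnMod {α : Type*} (P : α → Prop) (eqv le : α → α → Prop) (a a' : α) : Prop :=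
  P a ∧ P a' ∧ le a a' ∧ ¬ eqv a a' ∧
    ∀ c, P c → le a c → le c a' → (eqv c a ∨ eqv c a')

/-- `ρ` is a rank on `{a | P a}` ordered by `le`, modulo `eqv`:  along every
covering relation it increases by exactly `1`. -/
def IsRankOnMod {α : Type*} (P : α → Prop) (eqv le : α → α → Prop) (ρ : α → ℕ) : Prop :=
  ∀ a a', CoversOnMod P eqv le a a' → ρ a' = ρ a + 1

/-- `a'` covers `a` in `{a | P a}` ordered by `le`. -/
def CoversOn {α : Type*} (P : α → Prop) (le : α → α → Prop) : α → α → Prop :=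
  CoversOnMod P (· = ·) le

/-- `ρ` is a rank on `{a | P a}` ordered by `le`. -/
def IsRankOn {α : Type*} (P : α → Prop) (le : α → α → Prop) (ρ : α → ℕ) : Prop :=
  IsRankOnMod P (· = ·) le ρ

/-- `f` is a quotient of posets from `({a | P a}, lea)` onto `({b | Q b}, leb)`:
an order-preserving surjection such that any relation downstairs lifts to a
relation upstairs. -/
def IsPosetQuotient {α β : Type*} (P : α → Prop) (Q : β → Prop)
    (lea : α → α → Prop) (leb : β → β → Prop) (f : α → β) : Prop :=
  (∀ a, P a → Q (f a)) ∧
  (∀ a a', P a → P a' → lea a a' → leb (f a) (f a')) ∧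
  (∀ b, Q b → ∃ a, P a ∧ f a = b) ∧
  (∀ b b', Q b → Q b' → leb b b' →
    ∃ a a', P a ∧ P a' ∧ f a = b ∧ f a' = b' ∧ lea a a')

/-! ### Structures over the moduli of stable graphs -/

/-- Pairs `(G, S)` with `G` stable of genus `g` and `S ∈ A^b_G`. -/
noncomputable def PairStab (g b : ℕ) (p : WGraph × Finset ℕ) : Prop :=
  p.1.Stable g ∧ p.1.Ab b p.2

/-- Isomorphism of pairs `(G, S)`. -/
def PairIso (p q : WGraph × Finset ℕ) : Prop :=
  ∃ fV fE, p.1.IsoMaps q.1 fV fE ∧ p.2.image fE = q.2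

/-- The order on `A^b_g`: `(G,S) ≤ (H,T)` iff there is a contraction
`γ : G → H` (a contraction of `G` followed by an isomorphism onto `H`) with
`γ* T ⊆ S`. -/
noncomputable def AgLE (b : ℕ) (p q : WGraph × Finset ℕ) : Prop :=
  ∃ S₀ ⊆ p.1.E, ∃ fV fE, (p.1.contract S₀).IsoMaps q.1 fV fE ∧
    p.1.pullStar b (((p.1.contract S₀).E).filter fun e => fE e ∈ q.2) ⊆ p.2

/-- Triples `(G, S, O̅_S)` with `G` stable of genus `g`, `S ∈ A^b_G` and
`O_S ∈ 𝒪^b(G−S)` (representing elements of `𝒪̄𝒫^b_g`). -/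
noncomputable def TripP (g b : ℕ) (x : WGraph × Finset ℕ × Orient) : Prop :=
  x.1.Stable g ∧ x.1.Ab b x.2.1 ∧ x.1.MemOb x.2.1 b x.2.2

/-- Identification of triples: an isomorphism of the underlying graphs
carrying the subgraph and the class of the orientation (i.e. its divisor) of
one to the other. -/
noncomputable def TripEq (b : ℕ) (x y : WGraph × Finset ℕ × Orient) : Prop :=
  ∃ fV fE, x.1.IsoMaps y.1 fV fE ∧ x.2.1.image fE = y.2.1 ∧
    ∀ v ∈ x.1.V, y.1.divOr y.2.1 b y.2.2 (fV v) = x.1.divOr x.2.1 b x.2.2 v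

/-- The order on `𝒪̄𝒫^b_g`: `(G, O̅_S) ≤ (H, O̅_T)` iff there is a contraction
`γ : G → H` with `γ* T ⊆ S` and `γ̄_* O̅_S ≤ O̅_T`, the latter meaning that the
restriction of `O̅_T` to `H − γ_* S` equals `γ̄_* O̅_S` (compared through the
isomorphism, via the divisors). -/
noncomputable def OPgLE (b : ℕ) (x y : WGraph × Finset ℕ × Orient) : Prop :=
  ∃ S₀ ⊆ x.1.E, ∃ fV fE, (x.1.contract S₀).IsoMaps y.1 fV fE ∧
    x.1.pullStar b (((x.1.contract S₀).E).filter fun e => fE e ∈ y.2.1) ⊆ x.2.1 ∧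
    ∃ O', x.1.equivOr x.2.1 b O' x.2.2 ∧
      ((∀ e ∈ S₀, O' e ≠ some EdgeDir.bi) ∨ x.1.E \ (S₀ ∪ x.2.1) = ∅) ∧
      ∀ v ∈ (x.1.contract S₀).V,
        y.1.divOr ((x.2.1 \ S₀).image fE) b
            (restr y.2.2 (y.1.E \ (x.2.1 \ S₀).image fE)) (fV v)
          = (x.1.contract S₀).divOr (x.2.1 \ S₀) b
              (restr O' (x.1.E \ (S₀ ∪ x.2.1))) v

/-! ### Auxiliary machinery for `orientation_extension` -/

namespace WGraph

open Relation

variable (G : WGraph)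

/-- The crossing predicate used in `cutEdges`. -/
def crossZ (Z : Finset ℕ) (f : ℕ) : Prop :=
  ((G.ends f).1 ∈ Z ∧ (G.ends f).2 ∉ Z) ∨ ((G.ends f).1 ∉ Z ∧ (G.ends f).2 ∈ Z)

/-- Target of an edge traversed in direction `d`. -/
def tgtD (f : ℕ) (d : Bool) : ℕ := if d then (G.ends f).2 else (G.ends f).1

/-- Walks in the spanning subgraph with edge set `F`, recorded as lists of
(edge, direction) pairs. -/
def walkL (F : Finset ℕ) : List (ℕ × Bool) → ℕ → ℕ → Prop
  | [], a, b => a = b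
  | p :: L, a, b =>
      p.1 ∈ F ∧ (if p.2 then (G.ends p.1).1 else (G.ends p.1).2) = a ∧
        walkL F L (G.tgtD p.1 p.2) b

/-- The orientation determined by a walk. -/
def sigOf : List (ℕ × Bool) → ℕ → Option EdgeDir
  | [] => fun _ => none
  | p :: L => fun g =>
      if g = p.1 then some (if p.2 then EdgeDir.fwd else EdgeDir.bwd) else sigOf L g

lemma walkL_mem {F : Finset ℕ} :
    ∀ {L : List (ℕ × Bool)} {a b : ℕ}, G.walkL F L a b → ∀ p ∈ L, p.1 ∈ F := by
  intro L
  induction L with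
  | nil => intro a b _ p hp; simp at hp
  | cons q L ih =>
    intro a b hw p hp
    obtain ⟨h1, _, h3⟩ := hw
    rcases List.mem_cons.mp hp with rfl | hp
    · exact h1
    · exact ih h3 p hp

lemma walkL_mono {F F' : Finset ℕ} (hFF : F ⊆ F') :
    ∀ {L : List (ℕ × Bool)} {a b : ℕ}, G.walkL F L a b → G.walkL F' L a b := by
  intro L
  induction L with
  | nil => intro a b h; exact h
  | cons q L ih =>
    intro a b hw
    obtain ⟨h1, h2, h3⟩ := hw
    exact ⟨hFF h1, h2, ih h3⟩

lemma walkL_append {F : Finset ℕ} :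
    ∀ {L₁ L₂ : List (ℕ × Bool)} {a m b : ℕ},
      G.walkL F L₁ a m → G.walkL F L₂ m b → G.walkL F (L₁ ++ L₂) a b := by
  intro L₁
  induction L₁ with
  | nil => intro L₂ a m b h1 h2; cases h1; exact h2
  | cons q L₁ ih =>
    intro L₂ a m b h1 h2
    obtain ⟨ha, hb, hc⟩ := h1
    exact ⟨ha, hb, ih hc h2⟩

lemma walkL_split {F : Finset ℕ} :
    ∀ {L₁ L₂ : List (ℕ × Bool)} {a b : ℕ},
      G.walkL F (L₁ ++ L₂) a b → ∃ m, G.walkL F L₁ a m ∧ G.walkL F L₂ m b := by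
  intro L₁
  induction L₁ with
  | nil => intro L₂ a b h; exact ⟨a, rfl, h⟩
  | cons q L₁ ih =>
    intro L₂ a b h
    obtain ⟨h1, h2, h3⟩ := h
    obtain ⟨m, hm1, hm2⟩ := ih h3
    exact ⟨m, ⟨h1, h2, hm1⟩, hm2⟩

lemma walk_of_rtg {F : Finset ℕ} {a b : ℕ}
    (h : Relation.ReflTransGen (G.adjOn F) a b) : ∃ L, G.walkL F L a b := by
  induction h with
  | refl => exact ⟨[], rfl⟩
  | tail _ hstep ih =>
    obtain ⟨L, hL⟩ := ih
    obtain ⟨e, he, hends⟩ := hstep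
    have heF : e ∈ F := (Finset.mem_inter.mp he).1
    rcases hends with h | h
    · refine ⟨L ++ [(e, true)], G.walkL_append hL ?_⟩
      refine ⟨heF, ?_, ?_⟩
      · simp [h]
      · show G.tgtD e true = _
        simp [WGraph.tgtD, h]
    · refine ⟨L ++ [(e, false)], G.walkL_append hL ?_⟩
      refine ⟨heF, ?_, ?_⟩
      · simp [h]
      · show G.tgtD e false = _
        simp [WGraph.tgtD, h]

lemma adjOn_symm {F : Finset ℕ} : Symmetric (G.adjOn F) := by
  intro u v ⟨e, he, h⟩
  exact ⟨e, he, h.symm⟩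

lemma rtg_of_eqvGen {W F : Finset ℕ} {x y : {v : ℕ // v ∈ W}}
    (h : Relation.EqvGen (fun u v : {v : ℕ // v ∈ W} => G.adjOn F u.1 v.1) x y) :
    Relation.ReflTransGen (G.adjOn F) x.1 y.1 := by
  induction h with
  | rel a b hab => exact Relation.ReflTransGen.single hab
  | refl a => exact Relation.ReflTransGen.refl
  | symm a b _ ih => exact (@Relation.ReflTransGen.stdSymm _ _ ⟨fun _ _ h => G.adjOn_symm h⟩).symm _ _ ih
  | trans a b c _ _ ih1 ih2 => exact ih1.trans ih2

lemma ncomp_le (W : Finset ℕ) {F F' : Finset ℕ} (h : F ⊆ F') :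
    G.ncomp W F' ≤ G.ncomp W F := by
  classical
  set r := fun u v : {x : ℕ // x ∈ W} => G.adjOn F u.1 v.1 with hr
  set r' := fun u v : {x : ℕ // x ∈ W} => G.adjOn F' u.1 v.1 with hr'
  have hmono : ∀ u v, r u v → r' u v := by
    intro u v ⟨e, he, hh⟩
    rw [Finset.mem_inter] at he
    exact ⟨e, Finset.mem_inter.mpr ⟨h he.1, he.2⟩, hh⟩
  have hfin : Finite (Quot r) :=
    Finite.of_surjective (Quot.mk r) (fun q => Quot.inductionOn q fun x => ⟨x, rfl⟩)
  let φ : Quot r → Quot r' :=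
    Quot.lift (fun x => Quot.mk r' x) (fun a b hab => Quot.sound (hmono a b hab))
  have hsurj : Function.Surjective φ :=
    fun q => Quot.inductionOn q fun x => ⟨Quot.mk r x, rfl⟩
  exact Nat.card_le_card_of_surjective φ hsurj

lemma reach_of_not_bridge {T : Finset ℕ} {e : ℕ} (he : e ∈ G.E \ T)
    (hnb : ¬ G.IsBridge T e) :
    Relation.ReflTransGen (G.adjOn (G.E \ insert e T)) (G.ends e).1 (G.ends e).2 := by
  classical
  have hsub : G.E \ insert e T ⊆ G.E \ T :=
    Finset.sdiff_subset_sdiff (Finset.Subset.refl _) (Finset.subset_insert _ _)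
  have h1 : G.ncomp G.V (G.E \ T) ≤ G.ncomp G.V (G.E \ insert e T) := G.ncomp_le G.V hsub
  have h2 : ¬ G.ncomp G.V (G.E \ T) < G.ncomp G.V (G.E \ insert e T) := by
    intro hlt; exact hnb ⟨he, hlt⟩
  have heq : G.ncomp G.V (G.E \ T) = G.ncomp G.V (G.E \ insert e T) :=
    le_antisymm h1 (le_of_not_gt h2)
  have heE : e ∈ G.E := (Finset.mem_sdiff.mp he).1
  have hu : (G.ends e).1 ∈ G.V := (G.ends_mem e heE).1
  have hv : (G.ends e).2 ∈ G.V := (G.ends_mem e heE).2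
  set r := fun u v : {x : ℕ // x ∈ G.V} => G.adjOn (G.E \ insert e T) u.1 v.1 with hrdef
  set r' := fun u v : {x : ℕ // x ∈ G.V} => G.adjOn (G.E \ T) u.1 v.1 with hr'def
  have hmono : ∀ u v, r u v → r' u v := by
    intro u v ⟨f, hf, hh⟩
    rw [Finset.mem_inter] at hf
    exact ⟨f, Finset.mem_inter.mpr ⟨hsub hf.1, hf.2⟩, hh⟩
  have hfin : Finite (Quot r) :=
    Finite.of_surjective (Quot.mk r) (fun q => Quot.inductionOn q fun x => ⟨x, rfl⟩)
  let φ : Quot r → Quot r' :=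
    Quot.lift (fun x => Quot.mk r' x) (fun a b hab => Quot.sound (hmono a b hab))
  have hsurj : Function.Surjective φ :=
    fun q => Quot.inductionOn q fun x => ⟨Quot.mk r x, rfl⟩
  have hcard : Nat.card (Quot r) = Nat.card (Quot r') := heq.symm
  have hbij : Function.Bijective φ :=
    (Nat.bijective_iff_surjective_and_card φ).mpr ⟨hsurj, hcard⟩
  have hadj : r' ⟨(G.ends e).1, hu⟩ ⟨(G.ends e).2, hv⟩ := by
    refine ⟨e, Finset.mem_inter.mpr ⟨he, heE⟩, Or.inl ?_⟩
    rfl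
  have hφeq : φ (Quot.mk r ⟨(G.ends e).1, hu⟩) = φ (Quot.mk r ⟨(G.ends e).2, hv⟩) := by
    show Quot.mk r' _ = Quot.mk r' _
    exact Quot.sound hadj
  have hmk : Quot.mk r ⟨(G.ends e).1, hu⟩ = Quot.mk r ⟨(G.ends e).2, hv⟩ :=
    hbij.1 hφeq
  exact G.rtg_of_eqvGen (Quot.eq.mp hmk)

end WGraph

namespace WGraph

variable (G : WGraph)

lemma trail_of_walk {F : Finset ℕ} :
    ∀ {L : List (ℕ × Bool)} {a b : ℕ}, G.walkL F L a b →
      ∃ L', G.walkL F L' a b ∧ (L'.map Prod.fst).Nodup := by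
  intro L
  induction L with
  | nil => intro a b h; exact ⟨[], h, by simp⟩
  | cons p L₂ ih =>
    intro a b hw
    obtain ⟨hpF, hst, hw₂⟩ := hw
    obtain ⟨L₂', hw₂', hnd₂'⟩ := ih hw₂
    by_cases hmem : p.1 ∈ L₂'.map Prod.fst
    · obtain ⟨q, hq, hq1⟩ := List.mem_map.mp hmem
      obtain ⟨B, C, hBC⟩ := List.append_of_mem hq
      subst hBC
      obtain ⟨x, hwB, hwqC⟩ := G.walkL_split hw₂'
      obtain ⟨hqF, hqst, hwC⟩ := hwqC
      have hsub : (q :: C).map Prod.fst |>.Nodup := by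
        have : List.Sublist (q :: C) (B ++ q :: C) := List.sublist_append_right B (q :: C)
        exact hnd₂'.sublist (this.map Prod.fst)
      by_cases hdd : p.2 = q.2
      · -- same direction: `q :: C` works
        have hx : x = a := by
          cases hp2 : p.2 with
          | true =>
            rw [hp2] at hst hdd
            rw [hq1, ← hdd] at hqst
            simp only [if_pos rfl] at hqst hst
            rw [← hqst, ← hst]
          | false =>
            rw [hp2] at hst hdd
            rw [hq1, ← hdd] at hqst
            simp only [if_neg (Bool.false_ne_true)] at hqst hst
            rw [← hqst, ← hst]
        refine ⟨q :: C, ⟨hqF, ?_, hwC⟩, hsub⟩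
        rw [← hx]; exact hqst
      · -- opposite direction: `C` works
        have hx : G.tgtD q.1 q.2 = a := by
          cases hp2 : p.2 with
          | true =>
            have hq2 : q.2 = false := by
              cases hq2 : q.2
              · rfl
              · exact absurd (by rw [hp2, hq2]) hdd
            rw [hp2] at hst
            simp only [if_pos rfl] at hst
            rw [WGraph.tgtD, hq2, hq1]
            simpa using hst
          | false =>
            have hq2 : q.2 = true := by
              cases hq2 : q.2
              · exact absurd (by rw [hp2, hq2]) hdd
              · rfl
            rw [hp2] at hst
            simp only [if_neg (Bool.false_ne_true)] at hst
            rw [WGraph.tgtD, hq2, hq1]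
            simpa using hst
        refine ⟨C, ?_, ?_⟩
        · rw [← hx]; exact hwC
        · have : List.Sublist C (B ++ q :: C) :=
            (List.sublist_cons_self q C).trans (List.sublist_append_right B (q :: C))
          exact hnd₂'.sublist (this.map Prod.fst)
    · exact ⟨p :: L₂', ⟨hpF, hst, hw₂'⟩, by
        simp only [List.map_cons, List.nodup_cons]
        exact ⟨hmem, hnd₂'⟩⟩

lemma sigOf_eq {M : List (ℕ × Bool)} (hnd : (M.map Prod.fst).Nodup) {f : ℕ} {d : Bool}
    (h : (f, d) ∈ M) :
    sigOf M f = some (if d then EdgeDir.fwd else EdgeDir.bwd) := by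
  induction M with
  | nil => simp at h
  | cons q M₂ ih =>
    simp only [List.map_cons, List.nodup_cons] at hnd
    rcases List.mem_cons.mp h with heq | hmem
    · rw [← heq]
      simp [sigOf]
    · have hne : f ≠ q.1 := by
        intro hfq
        exact hnd.1 (hfq ▸ List.mem_map.mpr ⟨(f, d), hmem, rfl⟩)
      simp only [sigOf, if_neg hne]
      exact ih hnd.2 hmem

lemma sigOf_ne_bi (M : List (ℕ × Bool)) (f : ℕ) : sigOf M f ≠ some EdgeDir.bi := by
  induction M with
  | nil => simp [sigOf]
  | cons q M₂ ih =>
    simp only [sigOf]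
    by_cases h : f = q.1
    · simp only [if_pos h]
      cases q.2 <;> simp
    · simpa [if_neg h] using ih

lemma sigOf_none_of_not_mem {M : List (ℕ × Bool)} {f : ℕ}
    (h : f ∉ M.map Prod.fst) : sigOf M f = none := by
  induction M with
  | nil => rfl
  | cons q M₂ ih =>
    simp only [List.map_cons, List.mem_cons, not_or] at h
    simp only [sigOf, if_neg h.1]
    exact ih h.2

lemma dirT_tgtD_pos (f : ℕ) (d : Bool) :
    0 < dirT (some (if d then EdgeDir.fwd else EdgeDir.bwd)) (G.ends f) (G.tgtD f d) := by
  cases d <;> simp [dirT, WGraph.tgtD]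

/-- membership of directed target in `Z`, used as conclusions of `cutwalk`. -/
def inW (Z SS : Finset ℕ) (M : List (ℕ × Bool)) : Prop :=
  ∃ f d, (f, d) ∈ M ∧ f ∈ SS ∧ G.crossZ Z f ∧ G.tgtD f d ∈ Z

def outW (Z SS : Finset ℕ) (M : List (ℕ × Bool)) : Prop :=
  ∃ f d, (f, d) ∈ M ∧ f ∈ SS ∧ G.crossZ Z f ∧ G.tgtD f d ∉ Z

lemma inW_cons {Z SS : Finset ℕ} {M : List (ℕ × Bool)} {p : ℕ × Bool}
    (h : G.inW Z SS M) : G.inW Z SS (p :: M) := by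
  obtain ⟨f, d, h1, h2, h3, h4⟩ := h
  exact ⟨f, d, List.mem_cons_of_mem _ h1, h2, h3, h4⟩

lemma outW_cons {Z SS : Finset ℕ} {M : List (ℕ × Bool)} {p : ℕ × Bool}
    (h : G.outW Z SS M) : G.outW Z SS (p :: M) := by
  obtain ⟨f, d, h1, h2, h3, h4⟩ := h
  exact ⟨f, d, List.mem_cons_of_mem _ h1, h2, h3, h4⟩

lemma cutwalk {F : Finset ℕ} (Z SS : Finset ℕ) :
    ∀ (M : List (ℕ × Bool)) (a b : ℕ), G.walkL F M a b → (M.map Prod.fst).Nodup →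
      (∀ p ∈ M, p.1 ∉ SS → ¬ G.crossZ Z p.1) →
      ((a ∈ Z → b ∉ Z → G.outW Z SS M) ∧
       (a ∉ Z → b ∈ Z → G.inW Z SS M) ∧
       ((a ∈ Z ↔ b ∈ Z) → (∃ p ∈ M, G.crossZ Z p.1) → G.inW Z SS M ∧ G.outW Z SS M)) := by
  intro M
  induction M with
  | nil =>
    intro a b hw _ _
    cases hw
    exact ⟨fun h1 h2 => absurd h1 h2, fun h1 h2 => absurd h2 h1,
      fun _ hex => by simp at hex⟩
  | cons p M₂ ih =>
    intro a b hw hnd hyp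
    obtain ⟨hpF, hst, hw₂⟩ := hw
    simp only [List.map_cons, List.nodup_cons] at hnd
    have hyp₂ : ∀ q ∈ M₂, q.1 ∉ SS → ¬ G.crossZ Z q.1 :=
      fun q hq => hyp q (List.mem_cons_of_mem _ hq)
    obtain ⟨ih1, ih2, ih3⟩ := ih (G.tgtD p.1 p.2) b hw₂ hnd.2 hyp₂
    set m := G.tgtD p.1 p.2 with hm
    have hset : ((G.ends p.1).1 = a ∧ (G.ends p.1).2 = m) ∨
        ((G.ends p.1).1 = m ∧ (G.ends p.1).2 = a) := by
      cases hp2 : p.2 with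
      | true =>
        rw [hp2] at hst
        simp only [if_pos rfl] at hst
        exact Or.inl ⟨hst, by rw [hm, WGraph.tgtD, hp2]; simp⟩
      | false =>
        rw [hp2] at hst
        simp only [if_neg (Bool.false_ne_true)] at hst
        exact Or.inr ⟨by rw [hm, WGraph.tgtD, hp2]; simp, hst⟩
    have hcr : a ∈ Z → m ∉ Z → G.crossZ Z p.1 := by
      intro ha hmz
      rcases hset with ⟨h1, h2⟩ | ⟨h1, h2⟩
      · exact Or.inl ⟨h1 ▸ ha, h2 ▸ hmz⟩
      · exact Or.inr ⟨h1 ▸ hmz, h2 ▸ ha⟩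
    have hcr' : a ∉ Z → m ∈ Z → G.crossZ Z p.1 := by
      intro ha hmz
      rcases hset with ⟨h1, h2⟩ | ⟨h1, h2⟩
      · exact Or.inr ⟨h1 ▸ ha, h2 ▸ hmz⟩
      · exact Or.inl ⟨h1 ▸ hmz, h2 ▸ ha⟩
    have hnc : (a ∈ Z ↔ m ∈ Z) → ¬ G.crossZ Z p.1 := by
      intro hiff hc
      rcases hset with ⟨h1, h2⟩ | ⟨h1, h2⟩ <;>
        rcases hc with ⟨c1, c2⟩ | ⟨c1, c2⟩
      · exact c2 (h2 ▸ hiff.mp (h1 ▸ c1))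
      · exact c1 (h1 ▸ hiff.mpr (h2 ▸ c2))
      · exact c2 (h2 ▸ hiff.mpr (h1.symm ▸ c1 : m ∈ Z))
      · exact c1 (h1 ▸ (hiff.mp (h2 ▸ c2) : m ∈ Z))
    have hSS : G.crossZ Z p.1 → p.1 ∈ SS := by
      intro hc
      by_contra h
      exact hyp p (List.mem_cons_self) h hc
    have hpmem : (p.1, p.2) ∈ p :: M₂ := by
      simp
    have headIn : m ∈ Z → G.crossZ Z p.1 → G.inW Z SS (p :: M₂) :=
      fun hmz hc => ⟨p.1, p.2, hpmem, hSS hc, hc, hmz⟩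
    have headOut : m ∉ Z → G.crossZ Z p.1 → G.outW Z SS (p :: M₂) :=
      fun hmz hc => ⟨p.1, p.2, hpmem, hSS hc, hc, hmz⟩
    refine ⟨?_, ?_, ?_⟩
    · intro ha hb
      by_cases hmz : m ∈ Z
      · exact G.outW_cons (ih1 hmz hb)
      · exact headOut hmz (hcr ha hmz)
    · intro ha hb
      by_cases hmz : m ∈ Z
      · exact headIn hmz (hcr' ha hmz)
      · exact G.inW_cons (ih2 hmz hb)
    · intro hab hex
      by_cases hmz : m ∈ Z
      · by_cases ha : a ∈ Z
        · have hb : b ∈ Z := hab.mp ha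
          have hex₂ : ∃ q ∈ M₂, G.crossZ Z q.1 := by
            obtain ⟨q, hq, hcq⟩ := hex
            rcases List.mem_cons.mp hq with rfl | hq₂
            · exact absurd hcq (hnc (iff_of_true ha hmz))
            · exact ⟨q, hq₂, hcq⟩
          obtain ⟨hi, ho⟩ := ih3 (iff_of_true hmz hb) hex₂
          exact ⟨G.inW_cons hi, G.outW_cons ho⟩
        · have hb : b ∉ Z := fun h => ha (hab.mpr h)
          exact ⟨headIn hmz (hcr' ha hmz), G.outW_cons (ih1 hmz hb)⟩
      · by_cases ha : a ∈ Z
        · have hb : b ∈ Z := hab.mp ha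
          exact ⟨G.inW_cons (ih2 hmz hb), headOut hmz (hcr ha hmz)⟩
        · have hb : b ∉ Z := fun h => ha (hab.mpr h)
          have hex₂ : ∃ q ∈ M₂, G.crossZ Z q.1 := by
            obtain ⟨q, hq, hcq⟩ := hex
            rcases List.mem_cons.mp hq with rfl | hq₂
            · exact absurd hcq (hnc (iff_of_false ha hmz))
            · exact ⟨q, hq₂, hcq⟩
          obtain ⟨hi, ho⟩ := ih3 (iff_of_false hmz hb) hex₂
          exact ⟨G.inW_cons hi, G.outW_cons ho⟩

end WGraph

namespace WGraph

variable (G : WGraph)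

/-- Extension of an orientation on `G − S` by auxiliary data `σ`. -/
def extO (S : Finset ℕ) (σ O : Orient) : Orient :=
  fun f => if f ∈ G.E \ S then O f else σ f

lemma orient_none {S : Finset ℕ} {O : Orient} (h : G.IsOrientOn S O) {f : ℕ}
    (hf : f ∉ G.E \ S) : O f = none := by
  by_contra hne
  exact hf ((h f).mp hne)

lemma extO_isOrientOn {S T : Finset ℕ} {σ O : Orient} (hTS : T ⊆ S) (hSE : S ⊆ G.E)
    (hσ : ∀ f, σ f ≠ none ↔ f ∈ S \ T) (hO : G.IsOrientOn S O) :
    G.IsOrientOn T (G.extO S σ O) := by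
  intro f
  unfold extO
  by_cases hf : f ∈ G.E \ S
  · rw [if_pos hf]
    constructor
    · intro _
      rw [Finset.mem_sdiff] at hf ⊢
      exact ⟨hf.1, fun hfT => hf.2 (hTS hfT)⟩
    · intro _
      exact (hO f).mpr hf
  · rw [if_neg hf]
    rw [hσ f, Finset.mem_sdiff, Finset.mem_sdiff] at *
    constructor
    · intro ⟨h1, h2⟩
      exact ⟨hSE h1, h2⟩
    · intro ⟨h1, h2⟩
      rcases (Decidable.em (f ∈ S)) with hS | hS
      · exact ⟨hS, h2⟩
      · exact absurd ⟨h1, hS⟩ hf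

lemma restr_extO {S : Finset ℕ} {σ O : Orient} (hO : G.IsOrientOn S O) :
    restr (G.extO S σ O) (G.E \ S) = O := by
  funext f
  unfold restr extO
  by_cases hf : f ∈ G.E \ S
  · rw [if_pos hf, if_pos hf]
  · rw [if_neg hf, (G.orient_none hO hf)]

lemma biE_extO {S : Finset ℕ} {σ O : Orient} (hσ : ∀ f, σ f ≠ some EdgeDir.bi)
    (hO : G.IsOrientOn S O) : G.biE (G.extO S σ O) = G.biE O := by
  unfold biE
  apply Finset.filter_congr
  intro f _
  unfold extO
  by_cases hf : f ∈ G.E \ S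
  · rw [if_pos hf]
  · rw [if_neg hf, G.orient_none hO hf]
    constructor
    · intro h; exact absurd h (hσ f)
    · intro h; exact absurd h (by simp)

lemma tOr_extO {S : Finset ℕ} {σ O : Orient} (hO : G.IsOrientOn S O) (v : ℕ) :
    G.tOr (G.extO S σ O) v =
      G.tOr O v + ∑ e ∈ G.E, dirT (if e ∈ G.E \ S then none else σ e) (G.ends e) v := by
  unfold tOr
  rw [← Finset.sum_add_distrib]
  apply Finset.sum_congr rfl
  intro e _
  unfold extO
  by_cases he : e ∈ G.E \ S
  · rw [if_pos he, if_pos he]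
    simp [dirT]
  · rw [if_neg he, if_neg he, G.orient_none hO he]
    simp [dirT]

lemma cutEdges_mono {S'' S Z : Finset ℕ} (h : S'' ⊆ S) :
    G.cutEdges S Z ⊆ G.cutEdges S'' Z := by
  unfold cutEdges
  apply Finset.filter_subset_filter
  exact Finset.sdiff_subset_sdiff (Finset.Subset.refl _) h

lemma cutEdges_empty_iff {S Z : Finset ℕ} :
    G.cutEdges S Z = ∅ ↔ ∀ f ∈ G.E \ S, ¬ G.crossZ Z f := by
  unfold cutEdges
  rw [Finset.filter_eq_empty_iff]
  rfl

/-- Core inductive lemma for `b = 0`: a direction choice `σ` on `S \ T`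
extending every totally cyclic orientation on `G − S` to one on `G − T`. -/
lemma ext_zero (T : Finset ℕ) (hTE : T ⊆ G.E) (hTb : ∀ f, ¬ G.IsBridge T f) :
    ∀ n S, (S \ T).card = n → T ⊆ S → S ⊆ G.E →
      ∃ σ : Orient, (∀ f, σ f ≠ none ↔ f ∈ S \ T) ∧ (∀ f, σ f ≠ some EdgeDir.bi) ∧
        ∀ O, G.IsOrientOn S O → G.TotCyc S O → G.TotCyc T (G.extO S σ O) := by
  intro n
  induction n using Nat.strong_induction_on with
  | _ n IH =>
    intro S hcard hTS hSE
    by_cases hST : S = T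
    · subst hST
      refine ⟨fun _ => none, fun f => by simp, fun f => by simp, ?_⟩
      intro O hor htc
      have : G.extO S (fun _ => none) O = O := by
        funext f
        unfold extO
        by_cases hf : f ∈ G.E \ S
        · rw [if_pos hf]
        · rw [if_neg hf, G.orient_none hor hf]
      rw [this]
      exact htc
    · -- pick an edge `e ∈ S \ T`
      have hne : (S \ T).Nonempty := by
        rw [Finset.sdiff_nonempty]
        intro hsub
        exact hST (Finset.Subset.antisymm hsub hTS)
      obtain ⟨e, he⟩ := hne
      rw [Finset.mem_sdiff] at he
      have heE : e ∈ G.E := hSE he.1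
      have heET : e ∈ G.E \ T := Finset.mem_sdiff.mpr ⟨heE, he.2⟩
      -- closed walk through `e`
      have hreach := G.reach_of_not_bridge heET (hTb e)
      have hreach' : Relation.ReflTransGen (G.adjOn (G.E \ insert e T))
          (G.ends e).2 (G.ends e).1 :=
        (@Relation.ReflTransGen.stdSymm _ _ ⟨fun _ _ h => G.adjOn_symm h⟩).symm _ _ hreach
      obtain ⟨L₀, hL₀⟩ := G.walk_of_rtg hreach'
      obtain ⟨L, hL, hLnd⟩ := G.trail_of_walk hL₀
      have hLT : G.walkL (G.E \ T) L (G.ends e).2 (G.ends e).1 :=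
        G.walkL_mono (Finset.sdiff_subset_sdiff (Finset.Subset.refl _)
          (Finset.subset_insert _ _)) hL
      have heL : e ∉ L.map Prod.fst := by
        intro hmem
        obtain ⟨q, hq, hq1⟩ := List.mem_map.mp hmem
        have := G.walkL_mem hL q hq
        rw [hq1, Finset.mem_sdiff] at this
        exact this.2 (Finset.mem_insert_self _ _)
      set M : List (ℕ × Bool) := (e, true) :: L with hMdef
      have hMw : G.walkL (G.E \ T) M (G.ends e).1 (G.ends e).1 := by
        refine ⟨heET, by simp, ?_⟩
        show G.walkL (G.E \ T) L (G.tgtD e true) _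
        have : G.tgtD e true = (G.ends e).2 := by simp [WGraph.tgtD]
        rw [this]
        exact hLT
      have hMnd : (M.map Prod.fst).Nodup := by
        rw [hMdef]
        simp only [List.map_cons, List.nodup_cons]
        exact ⟨heL, hLnd⟩
      have hMmemE : ∀ p ∈ M, p.1 ∈ G.E \ T := fun p hp => G.walkL_mem hMw p hp
      -- cycle edge set
      set C : Finset ℕ := (M.map Prod.fst).toFinset ∩ S with hCdef
      have heC : e ∈ C := by
        rw [hCdef, Finset.mem_inter, List.mem_toFinset]
        exact ⟨by simp [hMdef], he.1⟩
      have hCS : C ⊆ S := Finset.inter_subset_right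
      have hCT : ∀ f ∈ C, f ∉ T := by
        intro f hf
        rw [hCdef, Finset.mem_inter, List.mem_toFinset] at hf
        obtain ⟨q, hq, hq1⟩ := List.mem_map.mp hf.1
        have := hMmemE q hq
        rw [hq1, Finset.mem_sdiff] at this
        exact this.2
      set S'' : Finset ℕ := S \ C with hS''def
      have hTS'' : T ⊆ S'' := by
        intro f hf
        rw [hS''def, Finset.mem_sdiff]
        exact ⟨hTS hf, fun hC => hCT f hC hf⟩
      have hS''E : S'' ⊆ G.E := (Finset.sdiff_subset).trans hSE
      have hcard'' : (S'' \ T).card < n := by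
        rw [← hcard]
        apply Finset.card_lt_card
        constructor
        · intro f hf
          rw [hS''def] at hf
          rw [Finset.mem_sdiff] at hf ⊢
          rw [Finset.mem_sdiff] at hf
          exact ⟨hf.1.1, hf.2⟩
        · intro hsub
          have : e ∈ S'' \ T := hsub (Finset.mem_sdiff.mpr ⟨he.1, he.2⟩)
          rw [Finset.mem_sdiff, hS''def, Finset.mem_sdiff] at this
          exact this.1.2 heC
      -- the orientation on C
      set σ₁ : Orient := fun f => if f ∈ C then sigOf M f else none with hσ₁def
      have hE'' : G.E \ S'' = (G.E \ S) ∪ C := by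
        ext f
        simp only [hS''def, Finset.mem_sdiff, Finset.mem_union]
        constructor
        · intro ⟨h1, h2⟩
          by_cases hfS : f ∈ S
          · right; by_contra hC; exact h2 ⟨hfS, hC⟩
          · left; exact ⟨h1, hfS⟩
        · intro h
          rcases h with ⟨h1, h2⟩ | h1
          · exact ⟨h1, fun hc => h2 hc.1⟩
          · exact ⟨hSE (hCS h1), fun hc => hc.2 h1⟩
      obtain ⟨σ₂, hσ₂supp, hσ₂bi, hσ₂ext⟩ := IH _ hcard'' S'' rfl hTS'' hS''E
      refine ⟨fun f => if f ∈ C then σ₁ f else σ₂ f, ?_, ?_, ?_⟩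
      · intro f
        dsimp only
        by_cases hfC : f ∈ C
        · rw [if_pos hfC]
          rw [hσ₁def]
          simp only [if_pos hfC]
          constructor
          · intro _
            rw [Finset.mem_sdiff]
            exact ⟨hCS hfC, hCT f hfC⟩
          · intro _
            rw [hCdef, Finset.mem_inter, List.mem_toFinset] at hfC
            obtain ⟨q, hq, hq1⟩ := List.mem_map.mp hfC.1
            have := sigOf_eq hMnd (hq1 ▸ hq : (f, q.2) ∈ M)
            rw [this]
            simp
        · rw [if_neg hfC, hσ₂supp f, hS''def]
          simp only [Finset.mem_sdiff]
          constructor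
          · intro ⟨⟨h1, _⟩, h3⟩; exact ⟨h1, h3⟩
          · intro ⟨h1, h3⟩; exact ⟨⟨h1, hfC⟩, h3⟩
      · intro f
        dsimp only
        by_cases hfC : f ∈ C
        · rw [if_pos hfC, hσ₁def]
          simp only [if_pos hfC]
          exact sigOf_ne_bi M f
        · rw [if_neg hfC]
          exact hσ₂bi f
      · intro O hor htc
        -- the intermediate orientation
        have hor'' : G.IsOrientOn S'' (G.extO S σ₁ O) := by
          intro f
          unfold extO
          by_cases hf : f ∈ G.E \ S
          · rw [if_pos hf, hE'', Finset.mem_union]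
            constructor
            · intro _; left; exact hf
            · intro _; exact (hor f).mpr hf
          · rw [if_neg hf, hσ₁def]
            by_cases hfC : f ∈ C
            · simp only [if_pos hfC]
              rw [hE'', Finset.mem_union]
              constructor
              · intro _; right; exact hfC
              · intro _
                rw [hCdef, Finset.mem_inter, List.mem_toFinset] at hfC
                obtain ⟨q, hq, hq1⟩ := List.mem_map.mp hfC.1
                rw [sigOf_eq hMnd (hq1 ▸ hq : (f, q.2) ∈ M)]
                simp
            · simp only [if_neg hfC]
              rw [hE'', Finset.mem_union]
              simp [hf, hfC]
        have htc'' : G.TotCyc S'' (G.extO S σ₁ O) := by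
          intro Z hZV hZne hZneV hcut
          by_cases hc : (G.cutEdges S Z).Nonempty
          · obtain ⟨⟨f₁, hf₁, v₁, hv₁, hd₁⟩, ⟨f₂, hf₂, v₂, hv₂, hd₂⟩⟩ :=
              htc Z hZV hZne hZneV hc
            have hsub'' : S'' ⊆ S := Finset.sdiff_subset
            have he₁ : (G.extO S σ₁ O) f₁ = O f₁ := by
              unfold extO
              rw [if_pos (Finset.mem_filter.mp hf₁).1]
            have he₂ : (G.extO S σ₁ O) f₂ = O f₂ := by
              unfold extO
              rw [if_pos (Finset.mem_filter.mp hf₂).1]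
            exact ⟨⟨f₁, G.cutEdges_mono hsub'' hf₁, v₁, hv₁, by rw [he₁]; exact hd₁⟩,
                   ⟨f₂, G.cutEdges_mono hsub'' hf₂, v₂, hv₂, by rw [he₂]; exact hd₂⟩⟩
          · have hSempty : G.cutEdges S Z = ∅ := Finset.not_nonempty_iff_eq_empty.mp hc
            obtain ⟨f₀, hf₀⟩ := hcut
            have hf₀' := Finset.mem_filter.mp hf₀
            have hf₀C : f₀ ∈ C := by
              by_contra hC
              have hfS : f₀ ∈ G.E \ S := by
                have h1 := hf₀'.1
                rw [hE'', Finset.mem_union] at h1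
                rcases h1 with h1 | h1
                · exact h1
                · exact absurd h1 hC
              have : f₀ ∈ G.cutEdges S Z := Finset.mem_filter.mpr ⟨hfS, hf₀'.2⟩
              rw [hSempty] at this
              exact absurd this (Finset.notMem_empty _)
            have hyp3 : ∀ p ∈ M, p.1 ∉ S → ¬ G.crossZ Z p.1 := by
              intro p hp hpS hcr
              have hpE : p.1 ∈ G.E \ T := hMmemE p hp
              have : p.1 ∈ G.cutEdges S Z := Finset.mem_filter.mpr
                ⟨Finset.mem_sdiff.mpr ⟨(Finset.mem_sdiff.mp hpE).1, hpS⟩, hcr⟩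
              rw [hSempty] at this
              exact absurd this (Finset.notMem_empty _)
            obtain ⟨_, _, h3⟩ := G.cutwalk Z S M (G.ends e).1 (G.ends e).1 hMw hMnd hyp3
            have hexM : ∃ p ∈ M, G.crossZ Z p.1 := by
              have hf₀C' := hf₀C
              rw [hCdef, Finset.mem_inter, List.mem_toFinset] at hf₀C'
              obtain ⟨q, hq, hq1⟩ := List.mem_map.mp hf₀C'.1
              refine ⟨q, hq, ?_⟩
              rw [hq1]
              exact hf₀'.2
            obtain ⟨⟨fi, di, hfiM, hfiS, hfiCr, hfiIn⟩, ⟨fo, dd, hfoM, hfoS, hfoCr, hfoOut⟩⟩ :=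
              h3 Iff.rfl hexM
            have memC : ∀ (f : ℕ) (d : Bool), (f, d) ∈ M → f ∈ S → f ∈ C := by
              intro f d hfd hfs
              rw [hCdef, Finset.mem_inter, List.mem_toFinset]
              exact ⟨List.mem_map.mpr ⟨(f, d), hfd, rfl⟩, hfs⟩
            have memcut : ∀ (f : ℕ), f ∈ C → G.crossZ Z f → f ∈ G.cutEdges S'' Z := by
              intro f hfc hcr
              refine Finset.mem_filter.mpr ⟨?_, hcr⟩
              rw [hE'', Finset.mem_union]
              right; exact hfc
            have valC : ∀ (f : ℕ) (d : Bool), (f, d) ∈ M → f ∈ C →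
                (G.extO S σ₁ O) f = some (if d then EdgeDir.fwd else EdgeDir.bwd) := by
              intro f d hfd hfc
              unfold extO
              have hfS' : f ∉ G.E \ S := by
                rw [Finset.mem_sdiff]
                intro hcon
                exact hcon.2 (hCS hfc)
              rw [if_neg hfS', hσ₁def]
              simp only [if_pos hfc]
              exact sigOf_eq hMnd hfd
            have hEmem : ∀ (f : ℕ) (d : Bool), (f, d) ∈ M → f ∈ G.E := by
              intro f d hfd
              have := hMmemE (f, d) hfd
              exact (Finset.mem_sdiff.mp this).1
            have htgtV : ∀ (f : ℕ) (d : Bool), (f, d) ∈ M → G.tgtD f d ∈ G.V := by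
              intro f d hfd
              have hE := hEmem f d hfd
              cases d
              · exact (show G.tgtD f false = (G.ends f).1 from rfl) ▸ (G.ends_mem f hE).1
              · exact (show G.tgtD f true = (G.ends f).2 from rfl) ▸ (G.ends_mem f hE).2
            constructor
            · refine ⟨fi, memcut fi (memC fi di hfiM hfiS) hfiCr, G.tgtD fi di, hfiIn, ?_⟩
              rw [valC fi di hfiM (memC fi di hfiM hfiS)]
              exact G.dirT_tgtD_pos fi di
            · refine ⟨fo, memcut fo (memC fo dd hfoM hfoS) hfoCr, G.tgtD fo dd,
                Finset.mem_sdiff.mpr ⟨htgtV fo dd hfoM, hfoOut⟩, ?_⟩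
              rw [valC fo dd hfoM (memC fo dd hfoM hfoS)]
              exact G.dirT_tgtD_pos fo dd
        have hglue : G.extO S'' σ₂ (G.extO S σ₁ O) =
            G.extO S (fun f => if f ∈ C then σ₁ f else σ₂ f) O := by
          funext f
          unfold extO
          dsimp only
          by_cases h1 : f ∈ G.E \ S
          · have h2 : f ∈ G.E \ S'' := by
              rw [hE'']
              exact Finset.mem_union_left _ h1
            rw [if_pos h2, if_pos h1, if_pos h1]
          · by_cases h2 : f ∈ C
            · have h3 : f ∈ G.E \ S'' := by
                rw [hE'']
                exact Finset.mem_union_right _ h2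
              rw [if_pos h3, if_neg h1, if_neg h1, if_pos h2]
            · have h3 : f ∉ G.E \ S'' := by
                rw [hE'']
                simp [h1, h2]
              rw [if_neg h3, if_neg h1, if_neg h2]
        have := hσ₂ext (G.extO S σ₁ O) hor'' htc''
        rw [hglue] at this
        exact this

end WGraph

namespace WGraph

variable (G : WGraph)

lemma orient_eq_of_empty {S : Finset ℕ} {O O' : Orient} (hES : G.E \ S = ∅)
    (hO : G.IsOrientOn S O) (hO' : G.IsOrientOn S O') : O = O' := by
  funext f
  have h1 : O f = none := G.orient_none hO (by rw [hES]; exact Finset.notMem_empty f)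
  have h2 : O' f = none := G.orient_none hO' (by rw [hES]; exact Finset.notMem_empty f)
  rw [h1, h2]

lemma divOr_extO_eq {S T : Finset ℕ} {σ O O' : Orient} (b : ℕ) (hTS : T ⊆ S)
    (hES : G.E \ S ≠ ∅) (hO : G.IsOrientOn S O) (hO' : G.IsOrientOn S O')
    (hdiv : G.divOr S b O = G.divOr S b O') :
    G.divOr T b (G.extO S σ O) = G.divOr T b (G.extO S σ O') := by
  have hET : G.E \ T ≠ ∅ := by
    intro h
    apply hES
    rw [← Finset.subset_empty, ← h]
    exact Finset.sdiff_subset_sdiff (Finset.Subset.refl _) hTS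
  funext v
  by_cases hv : v ∈ G.V
  · have htor : G.tOr O v = G.tOr O' v := by
      have h := congrFun hdiv v
      simp only [WGraph.divOr] at h
      rw [if_pos hv, if_pos hv, if_neg hES, if_neg hES] at h
      have h2 : (G.tOr O v : ℤ) = (G.tOr O' v : ℤ) := by linarith
      exact_mod_cast h2
    simp only [WGraph.divOr]
    rw [if_pos hv, if_pos hv, if_neg hET, if_neg hET,
      G.tOr_extO hO v, G.tOr_extO hO' v, htor]
  · simp only [WGraph.divOr]
    rw [if_neg hv, if_neg hv]

end WGraph

/-- For `S, T ∈ A^b_G` with `T ⊆ S`, every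
`O_S ∈ 𝒪^b(G−S)` extends to some `O_T ∈ 𝒪^b(G−T)`; moreover if
`O_S ∼ O'_S` with `O'_S ∈ 𝒪^b(G−S)`, then `O'_S` extends to some
`O'_T ∈ 𝒪^b(G−T)` with `O'_T ∼ O_T`. -/
theorem orientation_extension (G : WGraph) (b : ℕ) (hb : b = 0 ∨ b = 1)
    (S T : Finset ℕ) (hS : G.Ab b S) (hT : G.Ab b T) (hTS : T ⊆ S)
    (OS : Orient) (hOS : G.MemOb S b OS) :
    ∃ OT : Orient, G.MemOb T b OT ∧ restr OT (G.E \ S) = OS ∧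
      ∀ OS' : Orient, G.MemOb S b OS' → G.equivOr S b OS OS' →
        ∃ OT' : Orient, G.MemOb T b OT' ∧ restr OT' (G.E \ S) = OS' ∧
          G.equivOr T b OT OT' := by
  obtain ⟨hOSor, hOScase⟩ := hOS
  obtain ⟨hSE, _⟩ := hS
  rcases hb with rfl | rfl
  · -- b = 0
    have hTb : ∀ f, ¬ G.IsBridge T f := by
      rcases hT.2 with ⟨_, h⟩ | ⟨h, _⟩
      · exact h
      · exact absurd h (by simp)
    obtain ⟨hbiE, htc⟩ : G.biE OS = ∅ ∧ G.TotCyc S OS := by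
      rcases hOScase with ⟨_, h1, h2⟩ | ⟨h, _⟩
      · exact ⟨h1, h2⟩
      · exact absurd h (by simp)
    obtain ⟨σ, hσsupp, hσbi, hσext⟩ := G.ext_zero T hT.1 hTb (S \ T).card S rfl hTS hSE
    have hMem : ∀ O₀, G.IsOrientOn S O₀ → G.biE O₀ = ∅ → G.TotCyc S O₀ →
        G.MemOb T 0 (G.extO S σ O₀) := by
      intro O₀ h1 h2 h3
      refine ⟨G.extO_isOrientOn hTS hSE hσsupp h1, Or.inl ⟨rfl, ?_, hσext O₀ h1 h3⟩⟩
      rw [G.biE_extO hσbi h1, h2]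
    refine ⟨G.extO S σ OS, hMem OS hOSor hbiE htc, G.restr_extO hOSor, ?_⟩
    intro OS' hOS' hequiv
    obtain ⟨hOS'or, hOS'case⟩ := hOS'
    obtain ⟨hbiE', htc'⟩ : G.biE OS' = ∅ ∧ G.TotCyc S OS' := by
      rcases hOS'case with ⟨_, h1, h2⟩ | ⟨h, _⟩
      · exact ⟨h1, h2⟩
      · exact absurd h (by simp)
    refine ⟨G.extO S σ OS', hMem OS' hOS'or hbiE' htc', G.restr_extO hOS'or,
      G.extO_isOrientOn hTS hSE hσsupp hOSor,
      G.extO_isOrientOn hTS hSE hσsupp hOS'or, ?_⟩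
    by_cases hES : G.E \ S = ∅
    · rw [G.orient_eq_of_empty hES hOSor hOS'or]
    · exact G.divOr_extO_eq 0 hTS hES hOSor hOS'or hequiv.2.2
  · -- b = 1
    have hR : G.Rooted1 S OS := by
      rcases hOScase with ⟨h, _⟩ | ⟨_, h⟩
      · exact absurd h (by simp)
      · exact h
    rcases hR with ⟨e₀, hbi, hroot⟩ | ⟨hES, hV1⟩
    · -- non-degenerate case
      have he₀mem := Finset.mem_filter.mp (hbi ▸ Finset.mem_singleton_self e₀)
      have he₀ES : e₀ ∈ G.E \ S := (hOSor e₀).mp (by rw [he₀mem.2]; simp)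
      have hES : G.E \ S ≠ ∅ := fun h => Finset.notMem_empty e₀ (h ▸ he₀ES)
      set σ : Orient := fun f => if f ∈ S \ T then some EdgeDir.fwd else none with hσdef
      have hσsupp : ∀ f, σ f ≠ none ↔ f ∈ S \ T := by
        intro f
        rw [hσdef]
        dsimp only
        by_cases h : f ∈ S \ T <;> simp [h]
      have hσbi : ∀ f, σ f ≠ some EdgeDir.bi := by
        intro f
        rw [hσdef]
        dsimp only
        by_cases h : f ∈ S \ T <;> simp [h]
      have hMem : ∀ O₀ e₁, G.IsOrientOn S O₀ → G.biE O₀ = {e₁} → G.RootedAt S O₀ e₁ →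
          G.MemOb T 1 (G.extO S σ O₀) := by
        intro O₀ e₁ h1 h2 h3
        refine ⟨G.extO_isOrientOn hTS hSE hσsupp h1, Or.inr ⟨rfl, Or.inl ⟨e₁, ?_, ?_⟩⟩⟩
        · rw [G.biE_extO hσbi h1]
          exact h2
        · intro Z hZV hZneV hind
          have he₁mem := Finset.mem_filter.mp (h2 ▸ Finset.mem_singleton_self e₁)
          have he₁ES : e₁ ∈ G.E \ S := (h1 e₁).mp (by rw [he₁mem.2]; simp)
          have hindS : e₁ ∈ G.indEdges S Z := by
            have hh := Finset.mem_filter.mp hind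
            exact Finset.mem_filter.mpr ⟨he₁ES, hh.2⟩
          obtain ⟨f, hf, v, hv, hd⟩ := h3 Z hZV hZneV hindS
          refine ⟨f, G.cutEdges_mono hTS hf, v, hv, ?_⟩
          have hfeq : G.extO S σ O₀ f = O₀ f := by
            unfold WGraph.extO
            rw [if_pos (Finset.mem_filter.mp hf).1]
          rw [hfeq]
          exact hd
      refine ⟨G.extO S σ OS, hMem OS e₀ hOSor hbi hroot, G.restr_extO hOSor, ?_⟩
      intro OS' hOS' hequiv
      obtain ⟨hOS'or, hOS'case⟩ := hOS'
      have hR' : G.Rooted1 S OS' := by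
        rcases hOS'case with ⟨h, _⟩ | ⟨_, h⟩
        · exact absurd h (by simp)
        · exact h
      rcases hR' with ⟨e₁, hbi', hroot'⟩ | ⟨hES', _⟩
      · exact ⟨G.extO S σ OS', hMem OS' e₁ hOS'or hbi' hroot', G.restr_extO hOS'or,
          G.extO_isOrientOn hTS hSE hσsupp hOSor,
          G.extO_isOrientOn hTS hSE hσsupp hOS'or,
          G.divOr_extO_eq 1 hTS hES hOSor hOS'or hequiv.2.2⟩
      · exact absurd hES' hES
    · -- degenerate case: `G − S` has no edges and `V` is a single vertex
      have hOSnone : ∀ f, OS f = none := fun f =>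
        G.orient_none hOSor (by rw [hES]; exact Finset.notMem_empty f)
      by_cases hET : G.E \ T = ∅
      · have hor : G.IsOrientOn T OS := by
          intro f
          rw [hET]
          simp [hOSnone f]
        have hMem : G.MemOb T 1 OS := ⟨hor, Or.inr ⟨rfl, Or.inr ⟨hET, hV1⟩⟩⟩
        have hrestr : restr OS (G.E \ S) = OS := by
          funext f
          unfold restr
          by_cases h : f ∈ G.E \ S
          · rw [if_pos h]
          · rw [if_neg h, hOSnone f]
        refine ⟨OS, hMem, hrestr, ?_⟩
        intro OS' hOS' _
        have heq : OS = OS' := G.orient_eq_of_empty hES hOSor hOS'.1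
        exact ⟨OS, hMem, hrestr.trans heq, hor, hor, rfl⟩
      · obtain ⟨e₀, he₀⟩ := Finset.nonempty_iff_ne_empty.mpr hET
        set OT : Orient := fun f =>
          if f = e₀ then some EdgeDir.bi else
            if f ∈ G.E \ T then some EdgeDir.fwd else none with hOTdef
        have hor : G.IsOrientOn T OT := by
          intro f
          rw [hOTdef]
          dsimp only
          by_cases h : f = e₀
          · subst h
            simp [he₀]
          · rw [if_neg h]
            by_cases h2 : f ∈ G.E \ T <;> simp [h2]
        have hbiE : G.biE OT = {e₀} := by
          ext f
          rw [WGraph.biE, Finset.mem_filter, Finset.mem_singleton]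
          constructor
          · intro ⟨h1, h2⟩
            by_contra h
            rw [hOTdef] at h2
            dsimp only at h2
            rw [if_neg h] at h2
            by_cases h3 : f ∈ G.E \ T
            · rw [if_pos h3] at h2
              simp at h2
            · rw [if_neg h3] at h2
              simp at h2
          · intro h
            subst h
            refine ⟨(Finset.mem_sdiff.mp he₀).1, ?_⟩
            rw [hOTdef]
            simp
        have hroot : G.RootedAt T OT e₀ := by
          intro Z hZV hZneV hind
          obtain ⟨x, hx⟩ := Finset.card_eq_one.mp hV1
          rw [hx] at hZV
          have hZ : Z = ∅ := by
            rcases Finset.subset_singleton_iff.mp hZV with h | h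
            · exact h
            · exact absurd (h.trans hx.symm) hZneV
          rw [hZ] at hind
          have hh := Finset.mem_filter.mp hind
          exact absurd hh.2.1 (Finset.notMem_empty _)
        have hMem : G.MemOb T 1 OT := ⟨hor, Or.inr ⟨rfl, Or.inl ⟨e₀, hbiE, hroot⟩⟩⟩
        have hrestr : restr OT (G.E \ S) = OS := by
          funext f
          unfold restr
          rw [hES, if_neg (Finset.notMem_empty f), hOSnone f]
        refine ⟨OT, hMem, hrestr, ?_⟩
        intro OS' hOS' _
        have heq : OS = OS' := G.orient_eq_of_empty hES hOSor hOS'.1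
        exact ⟨OT, hMem, hrestr.trans heq, hor, hor, rfl⟩
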